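/- Let D be a dis-similarity function on three points x, y, z (D is positive on distinct pairs, zero only on equal pairs, not assumed symmetric). Suppose D(x,y) ≤ D(x,z), D(z,x) ≤ D(z,y), and D(y,z) < D(y,x). Then there is no symmetric distance d (d(u,v) ≥ 0, d(u,v) = 0 iff u = v, d(u,v) = d(v,u)) on {x,y,z} that is pointwise compatible with D, i.e. such that for every reference r and comparisons u, v among the three points, D(r,u) < D(r,v) iff d(r,u) < d(r,v). -/
import Mathlib


/-- If D(x,y) ≤ D(x,z), D(z,x) ≤ D(z,y), and D(y,z) < D(y,x) for a
dis-similarity D on three distinct points, then no symmetric distance on {x,y,z}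
is pointwise compatible with D. -/
theorem no_symmetric_distance_of_one_sided_triplet {α : Type*} (x y z : α)
    (hxy : x ≠ y) (hyz : y ≠ z) (hxz : x ≠ z)
    (D : α → α → ℝ)
    (hD0 : ∀ u ∈ ({x, y, z} : Set α), ∀ v ∈ ({x, y, z} : Set α), 0 ≤ D u v)
    (hDeq : ∀ u ∈ ({x, y, z} : Set α), ∀ v ∈ ({x, y, z} : Set α), (D u v = 0 ↔ u = v))
    (h1 : D x y ≤ D x z) (h2 : D z x ≤ D z y) (h3 : D y z < D y x) :
    ¬ ∃ d : α → α → ℝ,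
      (∀ u ∈ ({x, y, z} : Set α), ∀ v ∈ ({x, y, z} : Set α), 0 ≤ d u v) ∧
      (∀ u ∈ ({x, y, z} : Set α), ∀ v ∈ ({x, y, z} : Set α), (d u v = 0 ↔ u = v)) ∧
      (∀ u ∈ ({x, y, z} : Set α), ∀ v ∈ ({x, y, z} : Set α), d u v = d v u) ∧
      (∀ r ∈ ({x, y, z} : Set α), ∀ u ∈ ({x, y, z} : Set α), ∀ v ∈ ({x, y, z} : Set α),
        (D r u < D r v ↔ d r u < d r v)) := by
  rintro ⟨d, h0, heq, hsym, hcomp⟩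
  have hx : x ∈ ({x, y, z} : Set α) := by simp
  have hy : y ∈ ({x, y, z} : Set α) := by simp
  have hz : z ∈ ({x, y, z} : Set α) := by simp
  have c1 : d x y ≤ d x z :=
    not_lt.mp (fun h => not_lt.mpr h1 ((hcomp x hx z hz y hy).mpr h))
  have c2 : d z x ≤ d z y :=
    not_lt.mp (fun h => not_lt.mpr h2 ((hcomp z hz y hy x hx).mpr h))
  have c3 : d y z < d y x := (hcomp y hy z hz x hx).mp h3
  have s1 : d y x = d x y := hsym y hy x hx
  have s2 : d x z = d z x := hsym x hx z hz
  have s3 : d z y = d y z := hsym z hz y hy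
  linarith
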